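/- Suppose f is a multiplicative function with f(p) ≠ -1 for all primes p dividing n. Then ∑_{d|n} |μ(d)| ω(d) f(d) = (∏_{p|n} (1 + f(p))) · ∑_{p|n} f(p)/(1 + f(p)). -/
import Mathlib

open Finset ArithmeticFunction

lemma sum_powerset_card_mul_prod (s : Finset ℕ) (g : ℕ → ℂ)
    (hg : ∀ a ∈ s, 1 + g a ≠ 0) :
    ∑ t ∈ s.powerset, (t.card : ℂ) * ∏ a ∈ t, g a =
      (∏ a ∈ s, (1 + g a)) * ∑ a ∈ s, g a / (1 + g a) := by
  classical
  induction s using Finset.induction_on with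
  | empty => simp
  | @insert a s ha ih =>
    have hga : 1 + g a ≠ 0 := hg a (mem_insert_self a s)
    have hgs : ∀ b ∈ s, 1 + g b ≠ 0 := fun b hb => hg b (mem_insert_of_mem hb)
    have hprod : ∑ t ∈ s.powerset, ∏ b ∈ t, g b = ∏ b ∈ s, (1 + g b) := by
      have := Finset.prod_add (fun b => g b) (fun _ => (1:ℂ)) s
      simp only [Finset.prod_const_one, mul_one] at this
      rw [show (∏ b ∈ s, (1 + g b)) = ∏ b ∈ s, (g b + 1) from by
        exact Finset.prod_congr rfl fun b _ => add_comm 1 (g b), this]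
    rw [Finset.sum_powerset_insert ha, ih hgs]
    have hstep : ∀ t ∈ s.powerset,
        ((insert a t).card : ℂ) * ∏ b ∈ insert a t, g b =
          g a * ((t.card : ℂ) * ∏ b ∈ t, g b) + g a * ∏ b ∈ t, g b := by
      intro t ht
      have hat : a ∉ t := fun h => ha (Finset.mem_powerset.mp ht h)
      rw [Finset.card_insert_of_notMem hat, Finset.prod_insert hat]
      push_cast
      ring
    rw [Finset.sum_congr rfl hstep, Finset.sum_add_distrib, ← Finset.mul_sum,
      ← Finset.mul_sum, ih hgs, hprod, Finset.prod_insert ha,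
      Finset.sum_insert ha]
    field_simp
    ring

lemma f_prod_primes (f : ℕ → ℂ) (hf1 : f 1 = 1)
    (hfm : ∀ a b : ℕ, Nat.Coprime a b → f (a * b) = f a * f b)
    (t : Finset ℕ) (ht : ∀ p ∈ t, p.Prime) :
    f (∏ p ∈ t, p) = ∏ p ∈ t, f p := by
  classical
  induction t using Finset.induction_on with
  | empty => simpa using hf1
  | @insert a s ha ih =>
    have hap : (a : ℕ).Prime := ht a (mem_insert_self a s)
    have hcop : Nat.Coprime a (∏ p ∈ s, p) := by
      apply Nat.Coprime.prod_right
      intro b hb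
      exact (Nat.coprime_primes hap (ht b (mem_insert_of_mem hb))).mpr
        (fun h => ha (h ▸ hb))
    rw [Finset.prod_insert ha, Finset.prod_insert ha, hfm _ _ hcop,
      ih (fun p hp => ht p (mem_insert_of_mem hp))]

lemma squarefree_prod_primes (t : Finset ℕ) (ht : ∀ p ∈ t, p.Prime) :
    Squarefree (∏ p ∈ t, p) := by
  classical
  induction t using Finset.induction_on with
  | empty => simp
  | @insert a s ha ih =>
    have hap : (a : ℕ).Prime := ht a (mem_insert_self a s)
    have hcop : Nat.Coprime a (∏ p ∈ s, p) := by
      apply Nat.Coprime.prod_right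
      intro b hb
      exact (Nat.coprime_primes hap (ht b (mem_insert_of_mem hb))).mpr
        (fun h => ha (h ▸ hb))
    rw [Finset.prod_insert ha]
    exact (Nat.squarefree_mul hcop).mpr
      ⟨hap.squarefree, ih (fun p hp => ht p (mem_insert_of_mem hp))⟩

/-- For multiplicative `f` with `f(p) ≠ -1` for all primes `p | n`:
`∑_{d|n} |μ(d)| ω(d) f(d) = (∏_{p|n} (1 + f(p))) · ∑_{p|n} f(p)/(1 + f(p))`. -/
theorem sum_abs_moebius_omega_mul (f : ℕ → ℂ) (n : ℕ) (hn : 1 ≤ n)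
    (hf1 : f 1 = 1) (hfm : ∀ a b : ℕ, Nat.Coprime a b → f (a * b) = f a * f b)
    (hfp : ∀ p : ℕ, p.Prime → p ∣ n → f p ≠ -1) :
    (∑ d ∈ n.divisors,
        ((|(ArithmeticFunction.moebius d : ℤ)| : ℤ) : ℂ) *
          (ArithmeticFunction.cardDistinctFactors d : ℂ) * f d) =
      (∏ p ∈ n.primeFactors, (1 + f p)) * ∑ p ∈ n.primeFactors, f p / (1 + f p) := by
  classical
  have hn0 : n ≠ 0 := by omega
  -- restrict to squarefree divisors
  have h1 : (∑ d ∈ n.divisors,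
        ((|(moebius d : ℤ)| : ℤ) : ℂ) * (cardDistinctFactors d : ℂ) * f d) =
      ∑ d ∈ n.divisors with Squarefree d,
        ((|(moebius d : ℤ)| : ℤ) : ℂ) * (cardDistinctFactors d : ℂ) * f d := by
    rw [Finset.sum_filter_of_ne]
    intro d _ hne
    by_contra hsq
    apply hne
    rw [moebius_eq_zero_of_not_squarefree hsq]
    simp
  rw [h1, Nat.sum_divisors_filter_squarefree hn0, Nat.factors_eq]
  have htoF : (n.primeFactorsList : Multiset ℕ).toFinset = n.primeFactors := rfl
  rw [htoF]
  rw [← sum_powerset_card_mul_prod n.primeFactors f (fun p hp =>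
    fun h => hfp p (Nat.prime_of_mem_primeFactors hp) (Nat.dvd_of_mem_primeFactors hp)
      (by linear_combination h))]
  apply Finset.sum_congr rfl
  intro t ht
  have htsub : t ⊆ n.primeFactors := Finset.mem_powerset.mp ht
  have htpr : ∀ p ∈ t, p.Prime := fun p hp =>
    Nat.prime_of_mem_primeFactors (htsub hp)
  have hval : (t.val.prod : ℕ) = ∏ p ∈ t, p := by
    rw [Finset.prod_eq_multiset_prod]; simp
  rw [hval]
  have hsq : Squarefree (∏ p ∈ t, p) := squarefree_prod_primes t htpr
  have hpf : (∏ p ∈ t, p).primeFactors = t := Nat.primeFactors_prod htpr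
  have hω : (cardDistinctFactors (∏ p ∈ t, p) : ℂ) = (t.card : ℂ) := by
    rw [cardDistinctFactors_apply, ← List.card_toFinset]
    norm_cast
    show (Nat.primeFactors _).card = t.card
    rw [hpf]
  have hμ : |(moebius (∏ p ∈ t, p) : ℤ)| = 1 := abs_moebius_eq_one_of_squarefree hsq
  rw [hμ, hω, f_prod_primes f hf1 hfm t htpr]
  push_cast
  ring
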